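/- Let G be a cumulative distribution function on [0,∞) with G(0)=0 and finite mean 1/μ := ∫₀^∞ (1−G(x)) dx ∈ (0,∞). Set Ḡ(t) := 1−G(t) for t ≥ 0 and Ḡ(t) := 1 for t < 0. Then for every n ≥ 1 and every θ = (θ_1,…,θ_n) ∈ ℝⁿ the function x ↦ Σ_{k=1}^{n−1} (exp(Σ_{i=1}^{k} θ_i·1{x ≤ t_i}) − 1)·(Ḡ(t_k − x) − Ḡ(t_{k+1} − x)) + (exp(Σ_{i=1}^{n} θ_i·1{x ≤ t_i}) − 1)·Ḡ(t_n − x) is integrable over ℝ, and μ times its integral over ℝ equals S_n(θ) := Σ_{m=1}^{n} (e^{θ_m}−1) + Σ_{k=1}^{n−1} H_k Σ_{m=k}^{n−1} (e^{θ_{m−k+1}}−1)·exp(Σ_{i=m−k+2}^{m} θ_i)·(e^{θ_{m+1}}−1). -/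

import Mathlib

open MeasureTheory

/-- The tail function `Ḡ`: equals `1 - G(t)` for `t ≥ 0` and `1` for `t < 0`. -/
noncomputable def Gbar (G : ℝ → ℝ) (t : ℝ) : ℝ := if t < 0 then 1 else 1 - G t

/-- `S_n(θ)`: the cumulant-generating-function expression of the sampled
M/G/∞ queue-length process. -/
noncomputable def Sfun (H : ℕ → ℝ) (n : ℕ) (θ : ℕ → ℝ) : ℝ :=
  (∑ m ∈ Finset.Icc 1 n, (Real.exp (θ m) - 1)) +
    ∑ k ∈ Finset.Icc 1 (n - 1), H k *
      ∑ m ∈ Finset.Icc k (n - 1),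
        (Real.exp (θ (m - k + 1)) - 1) *
          Real.exp (∑ i ∈ Finset.Icc (m - k + 2) m, θ i) * (Real.exp (θ (m + 1)) - 1)

/-- The integrand `x ↦ Σ_{k=1}^{n−1} (exp(Σ_{i=1}^k θ_i 1{x ≤ t_i}) − 1)(Ḡ(t_k−x) − Ḡ(t_{k+1}−x))
    + (exp(Σ_{i=1}^n θ_i 1{x ≤ t_i}) − 1) Ḡ(t_n−x)` where `t_i = iδ`. -/
noncomputable def mgIntegrand (G : ℝ → ℝ) (δ : ℝ) (n : ℕ) (θ : ℕ → ℝ) (x : ℝ) : ℝ :=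
  (∑ k ∈ Finset.Icc 1 (n - 1),
      (Real.exp (∑ i ∈ Finset.Icc 1 k, if x ≤ (i : ℝ) * δ then θ i else 0) - 1) *
        (Gbar G ((k : ℝ) * δ - x) - Gbar G (((k : ℝ) + 1) * δ - x))) +
    (Real.exp (∑ i ∈ Finset.Icc 1 n, if x ≤ (i : ℝ) * δ then θ i else 0) - 1) *
      Gbar G ((n : ℝ) * δ - x)

namespace MG0

noncomputable def Afun (δ : ℝ) (θ : ℕ → ℝ) (m : ℕ) (x : ℝ) : ℝ :=
  ∑ i ∈ Finset.Icc 1 m, if x ≤ (i : ℝ) * δ then θ i else 0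

noncomputable def Bfun (G : ℝ → ℝ) (δ : ℝ) (θ : ℕ → ℝ) (k : ℕ) (x : ℝ) : ℝ :=
  Real.exp (Afun δ θ (k - 1) x) *
    (if x ≤ (k : ℝ) * δ then 1 - G ((k : ℝ) * δ - x) else 0)

lemma mg_eq (G : ℝ → ℝ) (δ : ℝ) (θ : ℕ → ℝ) (n : ℕ) (hn : 1 ≤ n) :
    ∀ x, mgIntegrand G δ n θ x =
      ∑ k ∈ Finset.Icc 1 n, (Real.exp (θ k) - 1) * Bfun G δ θ k x := by
  induction n, hn using Nat.le_induction with
  | base =>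
    intro x
    simp only [mgIntegrand, Bfun, Afun, show (1:ℕ) - 1 = 0 from rfl, Finset.Icc_self,
      Finset.sum_singleton, Nat.cast_one]
    rw [show Finset.Icc 1 0 = (∅ : Finset ℕ) from rfl]
    simp only [Finset.sum_empty, Real.exp_zero, one_mul, zero_add]
    by_cases hx : x ≤ δ
    · rw [if_pos hx, if_pos hx, Gbar, if_neg (by push_neg; linarith)]
    · rw [if_neg hx, if_neg hx]; simp
  | succ m hm ih =>
    intro x
    have hstep : mgIntegrand G δ (m + 1) θ x =
        mgIntegrand G δ m θ x + (Real.exp (θ (m + 1)) - 1) * Bfun G δ θ (m + 1) x := by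
      obtain ⟨p, rfl⟩ : ∃ p, m = p + 1 := ⟨m - 1, by omega⟩
      simp only [mgIntegrand, Nat.add_sub_cancel]
      rw [Finset.sum_Icc_succ_top (show 1 ≤ p + 1 by omega)]
      have hA : (∑ i ∈ Finset.Icc 1 (p + 2), if x ≤ (i : ℝ) * δ then θ i else 0) =
          (∑ i ∈ Finset.Icc 1 (p + 1), if x ≤ (i : ℝ) * δ then θ i else 0) +
            (if x ≤ ((p + 2 : ℕ) : ℝ) * δ then θ (p + 2) else 0) :=
        Finset.sum_Icc_succ_top (by omega) _
      have hc : (((p + 1 : ℕ) : ℝ) + 1) * δ = ((p + 2 : ℕ) : ℝ) * δ := by push_cast; ring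
      rw [hA, hc]
      have hBdef : Bfun G δ θ (p + 2) x =
          Real.exp (∑ i ∈ Finset.Icc 1 (p + 1), if x ≤ (i : ℝ) * δ then θ i else 0) *
            (if x ≤ ((p + 2 : ℕ) : ℝ) * δ then 1 - G (((p + 2 : ℕ) : ℝ) * δ - x) else 0) := by
        simp only [Bfun, Afun, show p+2-1 = p+1 from rfl]
      by_cases hx : x ≤ ((p + 2 : ℕ) : ℝ) * δ
      · rw [hBdef, if_pos hx, if_pos hx]
        have hG : Gbar G (((p + 2 : ℕ) : ℝ) * δ - x) = 1 - G (((p + 2 : ℕ) : ℝ) * δ - x) := by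
          rw [Gbar, if_neg (by push_neg; linarith)]
        rw [hG, Real.exp_add]
        ring
      · rw [hBdef, if_neg hx, if_neg hx, add_zero]
        ring
    rw [hstep, ih, Finset.sum_Icc_succ_top (show 1 ≤ m + 1 by omega)]

noncomputable def pset (δ : ℝ) (j : ℕ) : Set ℝ :=
  if j = 1 then Set.Iic δ else Set.Ioc (((j : ℝ) - 1) * δ) ((j : ℝ) * δ)

lemma pset_meas (δ : ℝ) (j : ℕ) : MeasurableSet (pset δ j) := by
  unfold pset; split
  · exact measurableSet_Iic
  · exact measurableSet_Ioc

lemma pset_le (δ : ℝ) (hδ : 0 < δ) {j k : ℕ} (hj : 1 ≤ j) (hjk : j ≤ k) :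
    ∀ x ∈ pset δ j, x ≤ (k : ℝ) * δ := by
  intro x hx
  have hk : (1 : ℝ) ≤ (k : ℝ) := by exact_mod_cast le_trans hj hjk
  have hjk' : (j : ℝ) ≤ (k : ℝ) := by exact_mod_cast hjk
  unfold pset at hx
  split at hx
  · have : x ≤ δ := hx
    nlinarith
  · have : x ≤ (j : ℝ) * δ := hx.2
    nlinarith

lemma exp_Afun_eq (δ : ℝ) (hδ : 0 < δ) (θ : ℕ → ℝ) (m : ℕ) (x : ℝ) :
    Real.exp (Afun δ θ m x) * (if x ≤ ((m : ℝ) + 1) * δ then 1 else 0) =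
      ∑ j ∈ Finset.Icc 1 (m + 1), Real.exp (∑ i ∈ Finset.Icc j m, θ i) *
        (pset δ j).indicator (fun _ => (1 : ℝ)) x := by
  induction m with
  | zero =>
    simp only [Afun, Nat.cast_zero, zero_add, one_mul, Finset.Icc_self, Finset.sum_singleton]
    rw [show Finset.Icc 1 0 = (∅ : Finset ℕ) from rfl]
    simp only [Finset.sum_empty, Real.exp_zero, one_mul]
    rw [show pset δ 1 = Set.Iic δ from if_pos rfl]
    by_cases hx : x ≤ δ
    · rw [if_pos hx, Set.indicator_of_mem (Set.mem_Iic.mpr hx)]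
    · rw [if_neg hx, Set.indicator_of_notMem (by simpa using hx)]
  | succ m ih =>
    have hA : Afun δ θ (m + 1) x =
        Afun δ θ m x + (if x ≤ ((m + 1 : ℕ) : ℝ) * δ then θ (m + 1) else 0) :=
      Finset.sum_Icc_succ_top (by omega) _
    have hRHS : ∑ j ∈ Finset.Icc 1 (m + 2), Real.exp (∑ i ∈ Finset.Icc j (m + 1), θ i) *
          (pset δ j).indicator (fun _ => (1 : ℝ)) x
        = Real.exp (θ (m + 1)) * (∑ j ∈ Finset.Icc 1 (m + 1),
            Real.exp (∑ i ∈ Finset.Icc j m, θ i) * (pset δ j).indicator (fun _ => (1 : ℝ)) x)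
          + (pset δ (m + 2)).indicator (fun _ => (1 : ℝ)) x := by
      rw [Finset.sum_Icc_succ_top (show 1 ≤ m + 2 by omega), Finset.mul_sum]
      congr 1
      · apply Finset.sum_congr rfl
        intro j hj
        have hj' : j ≤ m + 1 := (Finset.mem_Icc.mp hj).2
        rw [Finset.sum_Icc_succ_top hj', Real.exp_add]
        ring
      · rw [show Finset.Icc (m + 2) (m + 1) = (∅ : Finset ℕ) from
          Finset.Icc_eq_empty (by omega)]
        simp
    rw [hRHS, ← ih, hA]
    have hp2 : pset δ (m + 2) =
        Set.Ioc ((((m + 2 : ℕ) : ℝ) - 1) * δ) (((m + 2 : ℕ) : ℝ) * δ) := if_neg (by omega)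
    have hc1 : ((m + 1 : ℕ) : ℝ) * δ = ((m : ℝ) + 1) * δ := by push_cast; ring
    have hc2 : (((m + 1 : ℕ) : ℝ) + 1) * δ = ((m : ℝ) + 2) * δ := by push_cast; ring
    have hc3 : (((m + 2 : ℕ) : ℝ) - 1) * δ = ((m : ℝ) + 1) * δ := by push_cast; ring
    have hc4 : ((m + 2 : ℕ) : ℝ) * δ = ((m : ℝ) + 2) * δ := by push_cast; ring
    rw [hp2, hc1, hc2, hc3, hc4]
    have h12 : ((m : ℝ) + 1) * δ ≤ ((m : ℝ) + 2) * δ := by nlinarith [Nat.cast_nonneg (α := ℝ) m]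
    by_cases hx1 : x ≤ ((m : ℝ) + 1) * δ
    · rw [if_pos hx1, if_pos (le_trans hx1 h12), if_pos hx1,
        Set.indicator_of_notMem (by simp only [Set.mem_Ioc]; push_neg; intro h; linarith),
        Real.exp_add]
      ring
    · rw [if_neg hx1, if_neg hx1]
      have hA0 : Afun δ θ m x = 0 := by
        apply Finset.sum_eq_zero
        intro i hi
        have hi' : i ≤ m := (Finset.mem_Icc.mp hi).2
        have : (i : ℝ) * δ ≤ ((m : ℝ) + 1) * δ := by
          have : (i : ℝ) ≤ (m : ℝ) := by exact_mod_cast hi'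
          nlinarith
        rw [if_neg (by push_neg at hx1 ⊢; linarith)]
      rw [hA0]
      by_cases hx2 : x ≤ ((m : ℝ) + 2) * δ
      · rw [if_pos hx2, Set.indicator_of_mem (Set.mem_Ioc.mpr ⟨not_le.mp hx1, hx2⟩)]
        simp
      · rw [if_neg hx2,
          Set.indicator_of_notMem (by simp only [Set.mem_Ioc]; push_neg; intro h; linarith)]
        simp

lemma Bfun_eq (G : ℝ → ℝ) (δ : ℝ) (hδ : 0 < δ) (θ : ℕ → ℝ) (k : ℕ) (hk : 1 ≤ k) (x : ℝ) :
    Bfun G δ θ k x = ∑ j ∈ Finset.Icc 1 k, Real.exp (∑ i ∈ Finset.Icc j (k - 1), θ i) *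
      (pset δ j).indicator (fun y => 1 - G ((k : ℝ) * δ - y)) x := by
  obtain ⟨m, rfl⟩ : ∃ m, k = m + 1 := ⟨k - 1, by omega⟩
  have h1 : Bfun G δ θ (m + 1) x =
      (Real.exp (Afun δ θ m x) * (if x ≤ ((m : ℝ) + 1) * δ then 1 else 0)) *
        (1 - G (((m + 1 : ℕ) : ℝ) * δ - x)) := by
    simp only [Bfun, show m + 1 - 1 = m from rfl]
    have hc : ((m + 1 : ℕ) : ℝ) * δ = ((m : ℝ) + 1) * δ := by push_cast; ring
    rw [hc]
    split_ifs <;> ring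
  rw [h1, exp_Afun_eq δ hδ θ m x, Finset.sum_mul]
  apply Finset.sum_congr rfl
  intro j hj
  rw [show m + 1 - 1 = m from rfl, mul_assoc]
  congr 1
  by_cases hx : x ∈ pset δ j
  · rw [Set.indicator_of_mem hx, Set.indicator_of_mem hx]; ring
  · rw [Set.indicator_of_notMem hx, Set.indicator_of_notMem hx]; ring

lemma integrable_gk (G : ℝ → ℝ)
    (hint : IntegrableOn (fun x => 1 - G x) (Set.Ioi 0)) (c : ℝ) :
    Integrable (fun x => if x ≤ c then 1 - G (c - x) else 0) := by
  have hind : Integrable ((Set.Ioi (0 : ℝ)).indicator (fun y => 1 - G y)) :=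
    (integrable_indicator_iff measurableSet_Ioi).mpr hint
  have h2 := hind.comp_sub_left c
  apply h2.congr
  have hae : ∀ᵐ x : ℝ, x ≠ c := by
    rw [MeasureTheory.ae_iff]
    have : {x : ℝ | ¬x ≠ c} = {c} := by ext y; simp
    rw [this]
    exact measure_singleton c
  filter_upwards [hae] with x hx
  by_cases h : x ≤ c
  · have hlt : x < c := lt_of_le_of_ne h hx
    rw [Set.indicator_of_mem (by simp only [Set.mem_Ioi]; linarith), if_pos h]
  · rw [Set.indicator_of_notMem (by simp only [Set.mem_Ioi]; push_neg at h ⊢; linarith),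
      if_neg h]

lemma meas_expA (δ : ℝ) (θ : ℕ → ℝ) (m : ℕ) :
    Measurable (fun x => Real.exp (Afun δ θ m x)) := by
  apply Real.measurable_exp.comp
  unfold Afun
  apply Finset.measurable_sum
  intro i _
  exact Measurable.ite measurableSet_Iic measurable_const measurable_const

lemma bound_expA (δ : ℝ) (θ : ℕ → ℝ) (m : ℕ) (x : ℝ) :
    ‖Real.exp (Afun δ θ m x)‖ ≤ Real.exp (∑ i ∈ Finset.Icc 1 m, |θ i|) := by
  rw [Real.norm_eq_abs, abs_of_pos (Real.exp_pos _)]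
  apply Real.exp_le_exp.mpr
  apply Finset.sum_le_sum
  intro i _
  split
  · exact le_abs_self _
  · exact abs_nonneg _

lemma integrable_B (G : ℝ → ℝ)
    (hint : IntegrableOn (fun x => 1 - G x) (Set.Ioi 0)) (δ : ℝ) (θ : ℕ → ℝ) (k : ℕ) :
    Integrable (Bfun G δ θ k) := by
  exact (integrable_gk G hint ((k : ℝ) * δ)).bdd_mul
    (meas_expA δ θ (k - 1)).aestronglyMeasurable
    (Filter.Eventually.of_forall (bound_expA δ θ (k - 1)))

lemma integral_piece_one (G : ℝ → ℝ) (δ : ℝ) (k : ℕ) (hk : 1 ≤ k) :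
    ∫ x, (pset δ 1).indicator (fun y => 1 - G ((k : ℝ) * δ - y)) x =
      ∫ y in Set.Ioi (((k - 1 : ℕ) : ℝ) * δ), (1 - G y) := by
  have hpt : ∀ x : ℝ, (pset δ 1).indicator (fun y => 1 - G ((k : ℝ) * δ - y)) x =
      (Set.Ici ((k : ℝ) * δ - δ)).indicator (fun y => 1 - G y) ((k : ℝ) * δ - x) := by
    intro x
    rw [show pset δ 1 = Set.Iic δ from if_pos rfl]
    by_cases hx : x ≤ δ
    · rw [Set.indicator_of_mem (Set.mem_Iic.mpr hx),
        Set.indicator_of_mem (by simp only [Set.mem_Ici]; linarith)]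
    · rw [Set.indicator_of_notMem (by simpa using hx),
        Set.indicator_of_notMem (by simp only [Set.mem_Ici]; push_neg at hx ⊢; linarith)]
  calc ∫ x, (pset δ 1).indicator (fun y => 1 - G ((k : ℝ) * δ - y)) x
      = ∫ x, (Set.Ici ((k : ℝ) * δ - δ)).indicator (fun y => 1 - G y) ((k : ℝ) * δ - x) :=
        integral_congr_ae (Filter.Eventually.of_forall hpt)
    _ = ∫ y, (Set.Ici ((k : ℝ) * δ - δ)).indicator (fun y => 1 - G y) y :=
        integral_sub_left_eq_self _ volume _
    _ = ∫ y in Set.Ici ((k : ℝ) * δ - δ), (1 - G y) := integral_indicator measurableSet_Ici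
    _ = ∫ y in Set.Ioi ((k : ℝ) * δ - δ), (1 - G y) := integral_Ici_eq_integral_Ioi
    _ = ∫ y in Set.Ioi (((k - 1 : ℕ) : ℝ) * δ), (1 - G y) := by
        have : (k : ℝ) * δ - δ = ((k - 1 : ℕ) : ℝ) * δ := by
          push_cast [Nat.cast_sub hk]; ring
        rw [this]

lemma integral_piece_two (G : ℝ → ℝ)
    (hint : IntegrableOn (fun x => 1 - G x) (Set.Ioi 0)) (δ : ℝ) (hδ : 0 < δ)
    (k j : ℕ) (hj : 2 ≤ j) (hjk : j ≤ k) :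
    ∫ x, (pset δ j).indicator (fun y => 1 - G ((k : ℝ) * δ - y)) x =
      (∫ y in Set.Ioi (((k - j : ℕ) : ℝ) * δ), (1 - G y)) -
        ∫ y in Set.Ioi (((k - j + 1 : ℕ) : ℝ) * δ), (1 - G y) := by
  set a : ℝ := ((k : ℝ) - (j : ℝ)) * δ with ha
  set b : ℝ := ((k : ℝ) - (j : ℝ) + 1) * δ with hb
  have hjk' : (j : ℝ) ≤ (k : ℝ) := by exact_mod_cast hjk
  have hab : a ≤ b := by rw [ha, hb]; nlinarith
  have ha0 : 0 ≤ a := by rw [ha]; nlinarith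
  have e1 : ((k - j : ℕ) : ℝ) * δ = a := by push_cast [Nat.cast_sub hjk]; ring
  have e2 : ((k - j + 1 : ℕ) : ℝ) * δ = b := by push_cast [Nat.cast_sub hjk]; ring
  rw [e1, e2]
  have hpt : ∀ x : ℝ, (pset δ j).indicator (fun y => 1 - G ((k : ℝ) * δ - y)) x =
      (Set.Ico a b).indicator (fun y => 1 - G y) ((k : ℝ) * δ - x) := by
    intro x
    rw [show pset δ j = Set.Ioc (((j : ℝ) - 1) * δ) ((j : ℝ) * δ) from if_neg (by omega)]
    by_cases hx : x ∈ Set.Ioc (((j : ℝ) - 1) * δ) ((j : ℝ) * δ)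
    · obtain ⟨hx1, hx2⟩ := hx
      have hm1 : a ≤ (k : ℝ) * δ - x := by rw [ha]; nlinarith
      have hm2 : (k : ℝ) * δ - x < b := by rw [hb]; nlinarith
      rw [Set.indicator_of_mem (Set.mem_Ioc.mpr ⟨hx1, hx2⟩),
        Set.indicator_of_mem (Set.mem_Ico.mpr ⟨hm1, hm2⟩)]
    · rw [Set.indicator_of_notMem hx, Set.indicator_of_notMem (by
        intro hmem
        rw [Set.mem_Ico, ha, hb] at hmem
        exact hx (Set.mem_Ioc.mpr ⟨by nlinarith [hmem.1, hmem.2],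
          by nlinarith [hmem.1, hmem.2]⟩))]
  have hIab : IntegrableOn (fun y => 1 - G y) (Set.Ioc a b) :=
    hint.mono_set ((Set.Ioc_subset_Ioi_self).trans (Set.Ioi_subset_Ioi ha0))
  have hIb : IntegrableOn (fun y => 1 - G y) (Set.Ioi b) :=
    hint.mono_set (Set.Ioi_subset_Ioi (le_trans ha0 hab))
  have hdisj : Disjoint (Set.Ioc a b) (Set.Ioi b) := by
    rw [Set.disjoint_left]
    rintro y ⟨_, h1⟩ h2
    exact absurd h1 (not_le.mpr h2)
  have hsplit : ∫ y in Set.Ioi a, (1 - G y) =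
      (∫ y in Set.Ioc a b, (1 - G y)) + ∫ y in Set.Ioi b, (1 - G y) := by
    rw [← Set.Ioc_union_Ioi_eq_Ioi hab]
    exact setIntegral_union hdisj measurableSet_Ioi hIab hIb
  calc ∫ x, (pset δ j).indicator (fun y => 1 - G ((k : ℝ) * δ - y)) x
      = ∫ x, (Set.Ico a b).indicator (fun y => 1 - G y) ((k : ℝ) * δ - x) :=
        integral_congr_ae (Filter.Eventually.of_forall hpt)
    _ = ∫ y, (Set.Ico a b).indicator (fun y => 1 - G y) y :=
        integral_sub_left_eq_self _ volume _
    _ = ∫ y in Set.Ico a b, (1 - G y) := integral_indicator measurableSet_Ico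
    _ = ∫ y in Set.Ioc a b, (1 - G y) := by
        rw [integral_Ico_eq_integral_Ioo, integral_Ioc_eq_integral_Ioo]
    _ = (∫ y in Set.Ioi a, (1 - G y)) - ∫ y in Set.Ioi b, (1 - G y) := by
        rw [hsplit]; ring

lemma integrable_piece (G : ℝ → ℝ)
    (hint : IntegrableOn (fun x => 1 - G x) (Set.Ioi 0)) (δ : ℝ) (hδ : 0 < δ)
    {j k : ℕ} (hj : 1 ≤ j) (hjk : j ≤ k) :
    Integrable ((pset δ j).indicator (fun y => 1 - G ((k : ℝ) * δ - y))) := by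
  have heq : (pset δ j).indicator (fun y => 1 - G ((k : ℝ) * δ - y)) =
      (pset δ j).indicator (fun y => if y ≤ (k : ℝ) * δ then 1 - G ((k : ℝ) * δ - y) else 0) :=
    Set.indicator_congr (fun x hx => by rw [if_pos (pset_le δ hδ hj hjk x hx)])
  rw [heq]
  exact (integrable_gk G hint _).indicator (pset_meas δ j)

lemma integral_B (G : ℝ → ℝ)
    (hint : IntegrableOn (fun x => 1 - G x) (Set.Ioi 0)) (δ : ℝ) (hδ : 0 < δ)
    (θ : ℕ → ℝ) (k : ℕ) (hk : 1 ≤ k) :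
    ∫ x, Bfun G δ θ k x =
      Real.exp (∑ i ∈ Finset.Icc 1 (k - 1), θ i) *
          (∫ y in Set.Ioi (((k - 1 : ℕ) : ℝ) * δ), (1 - G y)) +
        ∑ j ∈ Finset.Icc 2 k, Real.exp (∑ i ∈ Finset.Icc j (k - 1), θ i) *
          ((∫ y in Set.Ioi (((k - j : ℕ) : ℝ) * δ), (1 - G y)) -
            ∫ y in Set.Ioi (((k - j + 1 : ℕ) : ℝ) * δ), (1 - G y)) := by
  have h1 : ∫ x, Bfun G δ θ k x = ∑ j ∈ Finset.Icc 1 k,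
      Real.exp (∑ i ∈ Finset.Icc j (k - 1), θ i) *
        ∫ x, (pset δ j).indicator (fun y => 1 - G ((k : ℝ) * δ - y)) x := by
    calc ∫ x, Bfun G δ θ k x
        = ∫ x, ∑ j ∈ Finset.Icc 1 k, Real.exp (∑ i ∈ Finset.Icc j (k - 1), θ i) *
            (pset δ j).indicator (fun y => 1 - G ((k : ℝ) * δ - y)) x :=
          integral_congr_ae (Filter.Eventually.of_forall (Bfun_eq G δ hδ θ k hk))
      _ = ∑ j ∈ Finset.Icc 1 k, ∫ x, Real.exp (∑ i ∈ Finset.Icc j (k - 1), θ i) *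
            (pset δ j).indicator (fun y => 1 - G ((k : ℝ) * δ - y)) x :=
          integral_finset_sum _ (fun j hj => by
            have hm := Finset.mem_Icc.mp hj
            exact (integrable_piece G hint δ hδ hm.1 hm.2).const_mul _)
      _ = ∑ j ∈ Finset.Icc 1 k, Real.exp (∑ i ∈ Finset.Icc j (k - 1), θ i) *
            ∫ x, (pset δ j).indicator (fun y => 1 - G ((k : ℝ) * δ - y)) x :=
          Finset.sum_congr rfl (fun j _ => MeasureTheory.integral_const_mul _ _)
  rw [h1, show Finset.Icc 1 k = insert 1 (Finset.Icc 2 k) from by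
      ext i; simp only [Finset.mem_Icc, Finset.mem_insert]; omega,
    Finset.sum_insert (by simp)]
  congr 1
  · rw [integral_piece_one G δ k hk]
  · apply Finset.sum_congr rfl
    intro j hj
    have hm := Finset.mem_Icc.mp hj
    rw [integral_piece_two G hint δ hδ k j hm.1 hm.2]

lemma abel_sum (p q : ℕ → ℝ) (m : ℕ) :
    p m * q m + ∑ l ∈ Finset.range m, p l * (q l - q (l + 1)) =
      p 0 * q 0 + ∑ l ∈ Finset.Icc 1 m, q l * (p l - p (l - 1)) := by
  induction m with
  | zero => simp
  | succ m ih =>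
    rw [Finset.sum_range_succ, Finset.sum_Icc_succ_top (by omega), Nat.add_sub_cancel]
    linarith [ih]

lemma Qlem (θ H : ℕ → ℝ) (hH0 : H 0 = 1) (k : ℕ) (hk : 1 ≤ k) :
    Real.exp (∑ i ∈ Finset.Icc 1 (k - 1), θ i) * H (k - 1) +
      ∑ j ∈ Finset.Icc 2 k, Real.exp (∑ i ∈ Finset.Icc j (k - 1), θ i) *
        (H (k - j) - H (k - j + 1))
    = 1 + ∑ l ∈ Finset.Icc 1 (k - 1), H l *
        ((Real.exp (θ (k - l)) - 1) *
          Real.exp (∑ i ∈ Finset.Icc (k - l + 1) (k - 1), θ i)) := by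
  set p : ℕ → ℝ := fun l => Real.exp (∑ i ∈ Finset.Icc (k - l) (k - 1), θ i) with hp
  have h1 : (∑ j ∈ Finset.Icc 2 k, Real.exp (∑ i ∈ Finset.Icc j (k - 1), θ i) *
      (H (k - j) - H (k - j + 1))) = ∑ l ∈ Finset.range (k - 1), p l * (H l - H (l + 1)) := by
    apply Finset.sum_nbij' (fun j => k - j) (fun l => k - l)
    · intro j hj; rw [Finset.mem_Icc] at hj; rw [Finset.mem_range]; omega
    · intro l hl; rw [Finset.mem_range] at hl; rw [Finset.mem_Icc]; omega
    · intro j hj; rw [Finset.mem_Icc] at hj; omega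
    · intro l hl; rw [Finset.mem_range] at hl; omega
    · intro j hj
      rw [Finset.mem_Icc] at hj
      simp only [hp]
      rw [show k - (k - j) = j by omega, show k - j + 1 = k - j + 1 from rfl]
  have hpk : Real.exp (∑ i ∈ Finset.Icc 1 (k - 1), θ i) = p (k - 1) := by
    simp only [hp]
    rw [show k - (k - 1) = 1 by omega]
  have hp0 : p 0 = 1 := by
    simp only [hp]
    rw [show Finset.Icc (k - 0) (k - 1) = ∅ from Finset.Icc_eq_empty (by omega)]
    simp
  rw [hpk, h1, abel_sum p H (k - 1), hp0, hH0, one_mul]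
  congr 1
  apply Finset.sum_congr rfl
  intro l hl
  rw [Finset.mem_Icc] at hl
  have hins : Finset.Icc (k - l) (k - 1) = insert (k - l) (Finset.Icc (k - l + 1) (k - 1)) := by
    ext i; simp only [Finset.mem_Icc, Finset.mem_insert]; omega
  have hpl : p l = Real.exp (θ (k - l)) *
      Real.exp (∑ i ∈ Finset.Icc (k - l + 1) (k - 1), θ i) := by
    simp only [hp]
    rw [hins, Finset.sum_insert (by simp), Real.exp_add]
  have hpl1 : p (l - 1) = Real.exp (∑ i ∈ Finset.Icc (k - l + 1) (k - 1), θ i) := by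
    simp only [hp]
    rw [show k - (l - 1) = k - l + 1 by omega]
  rw [hpl, hpl1]
  ring

lemma swap_lem (θ H : ℕ → ℝ) (n : ℕ) :
    ∑ k ∈ Finset.Icc 1 n, (Real.exp (θ k) - 1) *
        (1 + ∑ l ∈ Finset.Icc 1 (k - 1), H l *
          ((Real.exp (θ (k - l)) - 1) *
            Real.exp (∑ i ∈ Finset.Icc (k - l + 1) (k - 1), θ i)))
      = Sfun H n θ := by
  simp only [Sfun, mul_add, mul_one, Finset.sum_add_distrib]
  congr 1
  rw [show (∑ k ∈ Finset.Icc 1 n, (Real.exp (θ k) - 1) *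
        ∑ l ∈ Finset.Icc 1 (k - 1), H l * ((Real.exp (θ (k - l)) - 1) *
          Real.exp (∑ i ∈ Finset.Icc (k - l + 1) (k - 1), θ i)))
      = ∑ k ∈ Finset.Icc 1 n, ∑ l ∈ Finset.Icc 1 (k - 1), (Real.exp (θ k) - 1) *
          (H l * ((Real.exp (θ (k - l)) - 1) *
            Real.exp (∑ i ∈ Finset.Icc (k - l + 1) (k - 1), θ i))) from
    Finset.sum_congr rfl (fun k _ => Finset.mul_sum _ _ _)]
  rw [Finset.sum_comm' (t' := Finset.Icc 1 (n - 1)) (s' := fun l => Finset.Icc (l + 1) n)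
    (by intro k l; simp only [Finset.mem_Icc]; omega)]
  apply Finset.sum_congr rfl
  intro l hl
  rw [Finset.mem_Icc] at hl
  rw [Finset.mul_sum]
  apply Finset.sum_nbij' (fun k => k - 1) (fun m => m + 1)
  · intro k hk; rw [Finset.mem_Icc] at hk ⊢; omega
  · intro m hm; rw [Finset.mem_Icc] at hm ⊢; omega
  · intro k hk; rw [Finset.mem_Icc] at hk; omega
  · intro m hm; rw [Finset.mem_Icc] at hm; omega
  · intro k hk
    rw [Finset.mem_Icc] at hk
    rw [show k - 1 - l + 1 = k - l by omega, show k - 1 - l + 2 = k - l + 1 by omega,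
      show k - 1 + 1 = k by omega]
    ring

end MG0

/-- integrability of the conditional-MGF integrand and the identity
`μ ∫ f = S_n(θ)` with `H_k = μ ∫_{kδ}^∞ (1−G)`. -/
theorem stmt0 (G : ℝ → ℝ) (μ δ : ℝ) (hδ : 0 < δ)
    (hmono : Monotone G) (hG0 : G 0 = 0) (hG01 : ∀ x, 0 ≤ G x ∧ G x ≤ 1)
    (hμ : 0 < μ)
    (hint : IntegrableOn (fun x => 1 - G x) (Set.Ioi 0))
    (hmean : μ⁻¹ = ∫ x in Set.Ioi (0 : ℝ), (1 - G x))
    (n : ℕ) (hn : 1 ≤ n) (θ : ℕ → ℝ) :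
    Integrable (mgIntegrand G δ n θ) ∧
      μ * ∫ x : ℝ, mgIntegrand G δ n θ x =
        Sfun (fun k => μ * ∫ x in Set.Ioi ((k : ℝ) * δ), (1 - G x)) n θ := by
  have hmg := MG0.mg_eq G δ θ n hn
  have hBint : ∀ k : ℕ, Integrable (MG0.Bfun G δ θ k) := fun k =>
    MG0.integrable_B G hint δ θ k
  have hSumInt : Integrable (fun x => ∑ k ∈ Finset.Icc 1 n,
      (Real.exp (θ k) - 1) * MG0.Bfun G δ θ k x) :=
    integrable_finset_sum _ (fun k _ => (hBint k).const_mul _)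
  constructor
  · exact hSumInt.congr (Filter.Eventually.of_forall (fun x => (hmg x).symm))
  · set H : ℕ → ℝ := fun k => μ * ∫ x in Set.Ioi ((k : ℝ) * δ), (1 - G x) with hH
    have hH0 : H 0 = 1 := by
      simp only [hH, Nat.cast_zero, zero_mul]
      rw [← hmean, mul_inv_cancel₀ (ne_of_gt hμ)]
    have hμB : ∀ k : ℕ, 1 ≤ k → μ * ∫ x, MG0.Bfun G δ θ k x =
        Real.exp (∑ i ∈ Finset.Icc 1 (k - 1), θ i) * H (k - 1) +
          ∑ j ∈ Finset.Icc 2 k, Real.exp (∑ i ∈ Finset.Icc j (k - 1), θ i) *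
            (H (k - j) - H (k - j + 1)) := by
      intro k hk
      rw [MG0.integral_B G hint δ hδ θ k hk]
      simp only [hH]
      rw [mul_add, Finset.mul_sum]
      congr 1
      · ring
      · exact Finset.sum_congr rfl (fun j _ => by ring)
    calc μ * ∫ x, mgIntegrand G δ n θ x
        = μ * ∫ x, ∑ k ∈ Finset.Icc 1 n, (Real.exp (θ k) - 1) * MG0.Bfun G δ θ k x := by
          rw [integral_congr_ae (Filter.Eventually.of_forall hmg)]
      _ = μ * ∑ k ∈ Finset.Icc 1 n, ∫ x, (Real.exp (θ k) - 1) * MG0.Bfun G δ θ k x := by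
          rw [integral_finset_sum _ (fun k _ => (hBint k).const_mul _)]
      _ = ∑ k ∈ Finset.Icc 1 n, (Real.exp (θ k) - 1) * (μ * ∫ x, MG0.Bfun G δ θ k x) := by
          rw [Finset.mul_sum]
          exact Finset.sum_congr rfl (fun k _ => by
            rw [MeasureTheory.integral_const_mul]; ring)
      _ = ∑ k ∈ Finset.Icc 1 n, (Real.exp (θ k) - 1) *
            (1 + ∑ l ∈ Finset.Icc 1 (k - 1), H l *
              ((Real.exp (θ (k - l)) - 1) *
                Real.exp (∑ i ∈ Finset.Icc (k - l + 1) (k - 1), θ i))) := by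
          apply Finset.sum_congr rfl
          intro k hk
          rw [Finset.mem_Icc] at hk
          rw [hμB k hk.1, MG0.Qlem θ H hH0 k hk.1]
      _ = Sfun H n θ := MG0.swap_lem θ H n
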